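/- Forbidden ball property: let γ be a C¹ closed curve in ℝ³ with thickness Δ[γ] ≥ Θ > 0. If B is an open ball of radius Θ whose boundary sphere is tangent to γ at a point p ∈ γ (i.e., p ∈ ∂B and the tangent line of γ at p is tangent to ∂B at p), then B contains no point of γ. -/

import Mathlib

open Metric Set Real Function MeasureTheory
open scoped RealInnerProductSpace

noncomputable section
open Filter
set_option maxHeartbeats 1000000

abbrev E3 := EuclideanSpace ℝ (Fin 3)

open Classical in
/-- Circumcircle radius of three points in `ℝ³`: `∞` for collinear triples,
otherwise `abc/(4·area)` via Heron's formula. -/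
noncomputable def circumradius3 (x y z : E3) : ENNReal :=
  if Collinear ℝ ({x, y, z} : Set E3) then ⊤
  else ENNReal.ofReal (dist x y * dist y z * dist z x /
    Real.sqrt ((dist x y + dist y z + dist z x) * (-dist x y + dist y z + dist z x) *
      (dist x y - dist y z + dist z x) * (dist x y + dist y z - dist z x)))

/-- Thickness of a set of points (the image of a curve): infimum of circumradii
over all triples of distinct points. -/
noncomputable def thickness (Γ : Set E3) : ENNReal :=
  sInf {r | ∃ x ∈ Γ, ∃ y ∈ Γ, ∃ z ∈ Γ, x ≠ y ∧ y ≠ z ∧ x ≠ z ∧ r = circumradius3 x y z}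


lemma heron_poly (a b c t : ℝ) (hb : b^2 = a^2 + c^2 - 2*t) :
    (a+b+c)*(-a+b+c)*(a-b+c)*(a+b-c) = 4*(a^2*c^2 - t^2) := by
  linear_combination ((a+c)^2 + (a-c)^2 - b^2 - (a^2+c^2-2*t)) * hb

lemma collinear_inner_sq (x y z : E3) (h : Collinear ℝ ({x,y,z} : Set E3)) :
    ⟪y - x, z - x⟫^2 = ‖y-x‖^2 * ‖z-x‖^2 := by
  rw [collinear_iff_exists_forall_eq_smul_vadd] at h
  obtain ⟨p₀, dir, hmem⟩ := h
  obtain ⟨rx, hx⟩ := hmem x (by simp)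
  obtain ⟨ry, hy⟩ := hmem y (by simp)
  obtain ⟨rz, hz⟩ := hmem z (by simp)
  have h1 : y - x = (ry - rx) • dir := by rw [hx, hy]; simp [vadd_eq_add, sub_smul]
  have h2 : z - x = (rz - rx) • dir := by rw [hx, hz]; simp [vadd_eq_add, sub_smul]
  rw [h1, h2, real_inner_smul_left, real_inner_smul_right, real_inner_self_eq_norm_sq,
    norm_smul, norm_smul]
  simp only [mul_pow, Real.norm_eq_abs, sq_abs]
  ring

lemma periodic_inj (γ : ℝ → E3) (hper : Periodic γ (2*π))
    (hsimple : InjOn γ (Ico 0 (2*π))) {a b : ℝ}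
    (hab : |a - b| < 2*π) (h : γ a = γ b) : a = b := by
  have hT : (0:ℝ) < 2*π := by positivity
  set ka := ⌊a/(2*π)⌋ with hka
  set kb := ⌊b/(2*π)⌋ with hkb
  have ha1 : 0 ≤ a - ka*(2*π) := Int.sub_floor_div_mul_nonneg a hT
  have ha2 : a - ka*(2*π) < 2*π := Int.sub_floor_div_mul_lt a hT
  have hb1 : 0 ≤ b - kb*(2*π) := Int.sub_floor_div_mul_nonneg b hT
  have hb2 : b - kb*(2*π) < 2*π := Int.sub_floor_div_mul_lt b hT
  have hga : γ (a - ka*(2*π)) = γ a := hper.sub_int_mul_eq ka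
  have hgb : γ (b - kb*(2*π)) = γ b := hper.sub_int_mul_eq kb
  have heq : a - ka*(2*π) = b - kb*(2*π) :=
    hsimple ⟨ha1, by linarith⟩ ⟨hb1, by linarith⟩ (by rw [hga, hgb, h])
  have hk : a - b = ((ka - kb : ℤ) : ℝ) * (2*π) := by push_cast; linarith
  rw [hk, abs_mul, abs_of_pos hT] at hab
  have h1 : |((ka - kb : ℤ):ℝ)| < 1 := by
    by_contra hcon
    push_neg at hcon
    nlinarith
  have h2 : |ka - kb| < 1 := by exact_mod_cast h1
  have h3 := abs_lt.mp h2
  have : ka = kb := by omega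
  rw [this] at hk
  have : a - b = 0 := by simpa using hk
  linarith

theorem forbidden_ball (γ : ℝ → E3) (Θ : ℝ) (hΘ : 0 < Θ)
    (hper : Periodic γ (2 * π)) (hC1 : ContDiff ℝ 1 γ)
    (hreg : ∀ t, deriv γ t ≠ 0)
    (hsimple : InjOn γ (Ico 0 (2 * π)))
    (hthick : ENNReal.ofReal Θ ≤ thickness (range γ))
    (c : E3) (t₀ : ℝ)
    (htouch : dist (γ t₀) c = Θ)
    (htang : ⟪deriv γ t₀, γ t₀ - c⟫ = 0) :
    ∀ t, γ t ∉ Metric.ball c Θ := by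
  intro t ht
  rw [mem_ball] at ht
  set v := deriv γ t₀ with hv
  have hvne : v ≠ 0 := hreg t₀
  have hvpos : 0 < ‖v‖ := norm_pos_iff.mpr hvne
  have hpq : γ t₀ ≠ γ t := by
    intro h
    rw [← h] at ht; rw [htouch] at ht; exact lt_irrefl _ ht
  set d := dist (γ t₀) (γ t) with hdd
  have hd : 0 < d := dist_pos.mpr hpq
  set w₀ : E3 := γ t - γ t₀ with hw₀
  set N : E3 := c - γ t₀ with hN₀
  have hw₀n : ‖w₀‖ = d := by rw [hdd, dist_eq_norm, hw₀, norm_sub_rev]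
  have hNn : ‖N‖ = Θ := by rw [hN₀, norm_sub_rev, ← dist_eq_norm, htouch]
  have hvN : ⟪v, N⟫ = 0 := by
    rw [hN₀, show c - γ t₀ = -(γ t₀ - c) by abel, inner_neg_right, htang, neg_zero]
  -- point inside ball ⟹ ⟪w₀, N⟫ > d²/2
  have hwN : d^2/2 < ⟪w₀, N⟫ := by
    have h1 : ‖w₀ - N‖ < Θ := by
      rw [show w₀ - N = γ t - c by rw [hw₀, hN₀]; abel, ← dist_eq_norm]; exact ht
    have h2 : ‖w₀ - N‖^2 < Θ^2 := by nlinarith [norm_nonneg (w₀ - N)]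
    rw [norm_sub_sq_real, hw₀n, hNn] at h2
    nlinarith
  have hwNpos : 0 < ⟪w₀, N⟫ := lt_trans (by positivity) hwN
  -- Bessel-type inequality
  have hkey : (‖v‖ * ⟪w₀, N⟫)^2 ≤ (‖v‖^2*d^2 - ⟪v, w₀⟫^2) * Θ^2 := by
    have hCS := real_inner_mul_inner_self_le v ((Θ^2) • w₀ - ⟪w₀, N⟫ • N)
    simp only [inner_sub_left, inner_sub_right, real_inner_smul_left, real_inner_smul_right,
      real_inner_self_eq_norm_sq, conj_trivial, norm_smul, Real.norm_eq_abs, mul_pow,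
      sq_abs, hvN, hw₀n, hNn] at hCS
    have hΘ2 : 0 < Θ^2 := by positivity
    rw [real_inner_comm w₀ N] at hCS
    nlinarith [hCS, hΘ2]
  set Hlim : ℝ := ‖v‖^2*d^2 - ⟪v, w₀⟫^2 with hHlimdef
  have hHlimpos : 0 < Hlim := by
    have : 0 < (‖v‖ * ⟪w₀, N⟫)^2 := by positivity
    nlinarith [hkey, mul_pos hΘ hΘ]
  have hsqrtpos : 0 < Real.sqrt Hlim := Real.sqrt_pos.mpr hHlimpos
  have hsqrt : ‖v‖ * ⟪w₀, N⟫ / Θ ≤ Real.sqrt Hlim := by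
    rw [Real.le_sqrt (by positivity) hHlimpos.le, div_pow, div_le_iff₀ (by positivity)]
    exact hkey
  have hRlim : ‖v‖*d*d/(2*Real.sqrt Hlim) < Θ := by
    rw [div_lt_iff₀ (by positivity)]
    have h2 := mul_le_mul_of_nonneg_left hsqrt (by positivity : (0:ℝ) ≤ 2*Θ)
    have h3 : 2*Θ*(‖v‖ * ⟪w₀, N⟫ / Θ) = 2*‖v‖*⟪w₀, N⟫ := by
      field_simp
    rw [h3] at h2
    nlinarith [mul_lt_mul_of_pos_left hwN hvpos]
  -- the slope function
  set φ : ℝ → E3 := fun s => (s - t₀)⁻¹ • (γ s - γ t₀) with hφdef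
  have hderiv : HasDerivAt γ v t₀ := ((hC1.differentiable one_ne_zero) t₀).hasDerivAt
  have hφ : Tendsto φ (nhdsWithin t₀ {t₀}ᶜ) (nhds v) := by
    rw [hasDerivAt_iff_tendsto_slope] at hderiv; exact hderiv
  set w : ℝ → E3 := fun s => γ t - γ s with hwdef
  have hw : Tendsto w (nhdsWithin t₀ {t₀}ᶜ) (nhds w₀) :=
    ((continuous_const.sub hC1.continuous).tendsto t₀).mono_left nhdsWithin_le_nhds
  have h1 : Tendsto (fun s => ‖φ s‖) (nhdsWithin t₀ {t₀}ᶜ) (nhds ‖v‖) := hφ.norm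
  have h2 : Tendsto (fun s => ‖w s‖) (nhdsWithin t₀ {t₀}ᶜ) (nhds d) := by
    rw [← hw₀n]; exact hw.norm
  have h3 : Tendsto (fun s => ⟪φ s, w s⟫) (nhdsWithin t₀ {t₀}ᶜ) (nhds ⟪v, w₀⟫) :=
    hφ.inner hw
  set H : ℝ → ℝ := fun s => ‖φ s‖^2 * ‖w s‖^2 - ⟪φ s, w s⟫^2 with hHdef
  have hH : Tendsto H (nhdsWithin t₀ {t₀}ᶜ) (nhds Hlim) :=
    ((h1.pow 2).mul (h2.pow 2)).sub (h3.pow 2)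
  set F : ℝ → ℝ := fun s => ‖φ s‖ * d * ‖w s‖ / (2 * Real.sqrt (H s)) with hFdef
  have hF : Tendsto F (nhdsWithin t₀ {t₀}ᶜ) (nhds (‖v‖*d*d/(2*Real.sqrt Hlim))) := by
    apply Tendsto.div ((h1.mul tendsto_const_nhds).mul h2)
      (tendsto_const_nhds.mul ((Real.continuous_sqrt.tendsto Hlim).comp hH))
    positivity
  -- eventually facts
  have ev1 : ∀ᶠ s in nhdsWithin t₀ {t₀}ᶜ, 0 < H s := hH.eventually (eventually_gt_nhds hHlimpos)
  have ev2 : ∀ᶠ s in nhdsWithin t₀ {t₀}ᶜ, F s < Θ := hF.eventually (eventually_lt_nhds hRlim)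
  have ev3 : ∀ᶠ s in nhdsWithin t₀ {t₀}ᶜ, γ s ≠ γ t :=
    ((hC1.continuous.tendsto t₀).mono_left nhdsWithin_le_nhds).eventually_ne hpq
  have ev4 : ∀ᶠ s in nhdsWithin t₀ {t₀}ᶜ, |s - t₀| < 2*π :=
    ((eventually_abs_sub_lt t₀ (by positivity))).filter_mono nhdsWithin_le_nhds
  have ev5 : ∀ᶠ s in nhdsWithin t₀ {t₀}ᶜ, s ≠ t₀ :=
    eventually_mem_nhdsWithin.mono (fun s hs => hs)
  obtain ⟨s, hs1, hs2, hs3, hs4, hs5⟩ :=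
    (ev1.and (ev2.and (ev3.and (ev4.and ev5)))).exists
  set ε := s - t₀ with hεdef
  have hε : ε ≠ 0 := sub_ne_zero.mpr hs5
  have hεabs : 0 < |ε| := abs_pos.mpr hε
  have hsmul : γ s - γ t₀ = ε • φ s := (smul_inv_smul₀ hε _).symm
  have hxp : γ s ≠ γ t₀ := by
    intro h
    exact hs5 (periodic_inj γ hper hsimple hs4 h)
  -- the three side lengths
  have ha : dist (γ s) (γ t₀) = |ε| * ‖φ s‖ := by
    rw [dist_eq_norm, hsmul, norm_smul, Real.norm_eq_abs]
  have hc : dist (γ t) (γ s) = ‖w s‖ := by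
    rw [dist_eq_norm]
  have hu : γ t₀ - γ s = -(ε • φ s) := by rw [← hsmul]; abel
  have huw : ⟪γ t₀ - γ s, w s⟫ = -(ε * ⟪φ s, w s⟫) := by
    rw [hu, inner_neg_left, real_inner_smul_left]
  have hun : ‖γ t₀ - γ s‖ = |ε| * ‖φ s‖ := by
    rw [hu, norm_neg, norm_smul, Real.norm_eq_abs]
  have hb2 : (dist (γ t₀) (γ t))^2 =
      (dist (γ s) (γ t₀))^2 + (dist (γ t) (γ s))^2 - 2*⟪γ t₀ - γ s, w s⟫ := by
    have : γ t₀ - γ t = (γ t₀ - γ s) - w s := by rw [hwdef]; beta_reduce; abel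
    rw [dist_eq_norm, this, ha, hc, ← hun]
    rw [norm_sub_sq_real]
    ring
  have hheron : (dist (γ s) (γ t₀) + dist (γ t₀) (γ t) + dist (γ t) (γ s)) *
      (-dist (γ s) (γ t₀) + dist (γ t₀) (γ t) + dist (γ t) (γ s)) *
      (dist (γ s) (γ t₀) - dist (γ t₀) (γ t) + dist (γ t) (γ s)) *
      (dist (γ s) (γ t₀) + dist (γ t₀) (γ t) - dist (γ t) (γ s)) =
      4 * (ε^2 * H s) := by
    rw [heron_poly _ _ _ (⟪γ t₀ - γ s, w s⟫) hb2]
    rw [huw, ha, hc, hHdef]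
    simp only [mul_pow, neg_sq, sq_abs]
    ring
  -- non-collinearity
  have hnc : ¬ Collinear ℝ ({γ s, γ t₀, γ t} : Set E3) := by
    intro hcol
    have := collinear_inner_sq (γ s) (γ t₀) (γ t) hcol
    rw [show γ t - γ s = w s by rw [hwdef]] at this
    rw [huw, hun] at this
    have hcontra : ε^2 * H s = 0 := by
      rw [hHdef]
      simp only [mul_pow, neg_sq, sq_abs] at this ⊢
      nlinarith [this]
    have : H s = 0 := by
      have := mul_eq_zero.mp hcontra
      rcases this with h | h
      · exact absurd h (pow_ne_zero 2 hε)
      · exact h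
    linarith [hs1]
  -- compute the circumradius
  have hsqrtP : Real.sqrt (4 * (ε^2 * H s)) = 2 * |ε| * Real.sqrt (H s) := by
    have h4 : 4 * (ε^2 * H s) = (2 * |ε| * Real.sqrt (H s))^2 := by
      rw [mul_pow, mul_pow, sq_abs, Real.sq_sqrt hs1.le]; ring
    rw [h4, Real.sqrt_sq (by positivity)]
  have hFeq : dist (γ s) (γ t₀) * dist (γ t₀) (γ t) * dist (γ t) (γ s) /
      Real.sqrt ((dist (γ s) (γ t₀) + dist (γ t₀) (γ t) + dist (γ t) (γ s)) *
      (-dist (γ s) (γ t₀) + dist (γ t₀) (γ t) + dist (γ t) (γ s)) *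
      (dist (γ s) (γ t₀) - dist (γ t₀) (γ t) + dist (γ t) (γ s)) *
      (dist (γ s) (γ t₀) + dist (γ t₀) (γ t) - dist (γ t) (γ s))) = F s := by
    rw [hheron, hsqrtP, ha, hc, hFdef]
    have hsH : 0 < Real.sqrt (H s) := Real.sqrt_pos.mpr hs1
    rw [← hdd]
    field_simp
  have hlt : circumradius3 (γ s) (γ t₀) (γ t) < ENNReal.ofReal Θ := by
    rw [circumradius3, if_neg hnc, hFeq]
    exact (ENNReal.ofReal_lt_ofReal_iff hΘ).mpr hs2
  -- contradiction with thickness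
  have hmem : circumradius3 (γ s) (γ t₀) (γ t) ∈
      {r | ∃ x ∈ range γ, ∃ y ∈ range γ, ∃ z ∈ range γ,
        x ≠ y ∧ y ≠ z ∧ x ≠ z ∧ r = circumradius3 x y z} :=
    ⟨γ s, ⟨s, rfl⟩, γ t₀, ⟨t₀, rfl⟩, γ t, ⟨t, rfl⟩, hxp, hpq, hs3, rfl⟩
  have hle : thickness (range γ) ≤ circumradius3 (γ s) (γ t₀) (γ t) := sInf_le hmem
  exact absurd (le_trans hthick hle) (not_le.mpr hlt)
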